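/- Let F be a proper filter on [0,∞] (viewed as a general metric space with distance d(x,y) = max{y−x,0}, truncated subtraction). If liminf(F) := ⨆_{f∈F} ⨅_{x∈f} x is finite (≠ ∞), then F is weakly flat. -/

import Mathlib

open ENNReal

open Filter

theorem liminf_finite_weaklyflat (F : Filter ℝ≥0∞) [F.NeBot]
    (h : (⨆ f ∈ F, ⨅ x ∈ f, x) ≠ ∞) :
    ∀ ε : ℝ≥0∞, 0 < ε → ∃ f ∈ F, ∀ x ∈ f, ∀ g ∈ F, ∃ y ∈ g,
      y - x ≤ ε := by
  intro ε hε
  set L := (⨆ f ∈ F, ⨅ x ∈ f, x) with hL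
  set δ := min ε 1 with hδ
  have hδ0 : 0 < δ := lt_min hε one_pos
  have hδtop : δ ≠ ∞ := ne_top_of_le_ne_top one_ne_top (min_le_right _ _)
  have h2 : 0 < δ / 2 := ENNReal.half_pos hδ0.ne'
  have hhalf : δ / 2 + δ / 2 = δ := ENNReal.add_halves δ
  obtain ⟨f, hf, hfx⟩ : ∃ f ∈ F, ∀ x ∈ f, L - δ / 2 ≤ x := by
    rcases eq_or_ne L 0 with h0 | h0
    · exact ⟨Set.univ, Filter.univ_mem, fun x _ => by simp [h0]⟩
    · have hlt : L - δ / 2 < L := ENNReal.sub_lt_self h h0 h2.ne'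
      rw [hL] at hlt
      simp only [lt_iSup_iff] at hlt
      obtain ⟨f, hfF, hflt⟩ := hlt
      exact ⟨f, hfF, fun x hx => hflt.le.trans (biInf_le _ hx)⟩
  refine ⟨f, hf, fun x hx g hg => ?_⟩
  have hle : (⨅ y ∈ g, y) ≤ L := le_biSup (fun g => ⨅ y ∈ g, y) hg
  have hlt : (⨅ y ∈ g, y) < L + δ / 2 := hle.trans_lt (ENNReal.lt_add_right h h2.ne')
  simp only [iInf_lt_iff] at hlt
  obtain ⟨y, hy, hylt⟩ := hlt
  refine ⟨y, hy, ?_⟩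
  have hx' := hfx x hx
  have key : (L + δ / 2) - (L - δ / 2) ≤ δ := by
    rw [tsub_le_iff_right]
    rcases le_total (δ / 2) L with hc | hc
    · calc L + δ / 2 = L - δ / 2 + δ / 2 + δ / 2 := by rw [tsub_add_cancel_of_le hc]
        _ = L - δ / 2 + δ := by rw [add_assoc, hhalf]
        _ ≤ δ + (L - δ / 2) := le_of_eq (add_comm _ _)
    · rw [tsub_eq_zero_of_le hc, add_zero]
      calc L + δ / 2 ≤ δ / 2 + δ / 2 := add_le_add hc le_rfl
        _ = δ := hhalf
  calc y - x ≤ (L + δ / 2) - (L - δ / 2) := tsub_le_tsub hylt.le hx'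
    _ ≤ δ := key
    _ ≤ ε := min_le_left _ _
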